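/- Let k, l, m, n be rational numbers with k < m, n < l, k ≠ l, n ≠ m, lm - kn ≠ 0, and l - n + m - k ≠ lm - kn (i.e., the candidate pole is not -1). Define R(s) as the sum of the three rational functions: -s·g²/((s+1)((lm-kn)s + l-n+m-k)), ((b-l)(m-k)-(l-n)(k-a))/(((lm-kn)s+l-n+m-k)((bk-al)s+b-l+k-a)), and ((l-n)(c-m)-(n-d)(m-k))/(((lm-kn)s+l-n+m-k)((nc-md)s+n-d+c-m)), for parameters a,b,c,d,g. If all the denominators other than ((lm-kn)s + l-n+m-k) are nonzero at s₀ = -(l-n+m-k)/(lm-kn), then the residue of R at s₀ equals (l-n+m-k)·((ml-nk)(ml-nk+k-m+n-l) + g²(n-m)(k-l)) / ((lm-kn)(n-m)(k-l)(ml-nk+k-m+n-l)). -/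

import Mathlib

open Filter Topology

lemma aux5 (t c p q r x y z : ℚ) (ht : t ≠ 0) :
    t * (x / (p * (c * t)) + y / ((c * t) * q) + z / ((c * t) * r))
      = x / (p * c) + y / (c * q) + z / (c * r) := by
  have h : ∀ u d : ℚ, t * (u / (d * t)) = u / d := fun u d => by
    rw [← div_div, mul_comm, div_mul_cancel₀ _ ht]
  rw [show p * (c * t) = (p * c) * t by ring, show (c * t) * q = (c * q) * t by ring,
    show (c * t) * r = (c * r) * t by ring, mul_add, mul_add, h, h, h]

set_option maxHeartbeats 1000000 in
/-- The residue at `s₀ = -(l-n+m-k)/(lm-kn)` of the sum of the three terms of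
the local topological zeta function coming from a compact facet with endpoints
`(k,l)` and `(m,n)`, neighbouring vertices `(a,b)` and `(c,d)`, and normalized
volume `g`. -/
theorem stmt5 (k l m n a b c d g : ℚ)
    (hkm : k < m) (hnl : n < l) (hkl : k ≠ l) (hnm : n ≠ m)
    (hN : l * m - k * n ≠ 0)
    (hnot1 : l - n + m - k ≠ l * m - k * n)
    (s₀ : ℚ) (hs₀ : s₀ = -(l - n + m - k) / (l * m - k * n))
    (hden1 : (b * k - a * l) * s₀ + b - l + k - a ≠ 0)
    (hden2 : (n * c - m * d) * s₀ + n - d + c - m ≠ 0) :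
    Tendsto
      (fun s : ℚ => (s - s₀) *
        (-(s * g ^ 2) / ((s + 1) * ((l * m - k * n) * s + l - n + m - k))
          + ((b - l) * (m - k) - (l - n) * (k - a)) /
              (((l * m - k * n) * s + l - n + m - k) *
                ((b * k - a * l) * s + b - l + k - a))
          + ((l - n) * (c - m) - (n - d) * (m - k)) /
              (((l * m - k * n) * s + l - n + m - k) *
                ((n * c - m * d) * s + n - d + c - m))))
      (𝓝[≠] s₀)
      (𝓝 ((l - n + m - k) *
            ((m * l - n * k) * (m * l - n * k + k - m + n - l)
              + g ^ 2 * (n - m) * (k - l)) /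
            ((l * m - k * n) * (n - m) * (k - l) *
              (m * l - n * k + k - m + n - l)))) := by
  have hNM : n - m ≠ 0 := sub_ne_zero.mpr hnm
  have hKL : k - l ≠ 0 := sub_ne_zero.mpr hkl
  have hC : m * l - n * k + k - m + n - l ≠ 0 := by
    intro h; exact hnot1 (by linarith)
  have hNs : (l * m - k * n) * s₀ = -(l - n + m - k) := by
    rw [hs₀]; field_simp
  have hs1 : s₀ + 1 ≠ 0 := by
    intro h
    have hs : s₀ = -1 := by linarith
    rw [hs] at hNs
    exact hnot1 (by linarith)
  have key : ∀ s : ℚ, (l * m - k * n) * s + l - n + m - k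
      = (l * m - k * n) * (s - s₀) := fun s => by linear_combination hNs
  set G : ℚ → ℚ := fun s =>
    -(s * g ^ 2) / ((s + 1) * (l * m - k * n))
      + ((b - l) * (m - k) - (l - n) * (k - a)) /
          ((l * m - k * n) * ((b * k - a * l) * s + b - l + k - a))
      + ((l - n) * (c - m) - (n - d) * (m - k)) /
          ((l * m - k * n) * ((n * c - m * d) * s + n - d + c - m)) with hG
  have hcont : ContinuousAt G s₀ := by
    apply ContinuousAt.add
    apply ContinuousAt.add
    · exact ContinuousAt.div (by fun_prop) (by fun_prop) (mul_ne_zero hs1 hN)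
    · exact ContinuousAt.div (by fun_prop) (by fun_prop) (mul_ne_zero hN hden1)
    · exact ContinuousAt.div (by fun_prop) (by fun_prop) (mul_ne_zero hN hden2)
  have hval : G s₀ = (l - n + m - k) *
      ((m * l - n * k) * (m * l - n * k + k - m + n - l)
        + g ^ 2 * (n - m) * (k - l)) /
      ((l * m - k * n) * (n - m) * (k - l) *
        (m * l - n * k + k - m + n - l)) := by
    have hd0 : (l * m - k * n) - (l - n + m - k) ≠ 0 :=
      sub_ne_zero.mpr (Ne.symm hnot1)
    have f1 : (l * m - k * n) * ((b * k - a * l) * s₀ + b - l + k - a)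
        = (l - k) * ((b - l) * (m - k) - (l - n) * (k - a)) := by
      linear_combination (b * k - a * l) * hNs
    have f2 : (l * m - k * n) * ((n * c - m * d) * s₀ + n - d + c - m)
        = (m - n) * ((l - n) * (c - m) - (n - d) * (m - k)) := by
      linear_combination (n * c - m * d) * hNs
    have hLK : l - k ≠ 0 := sub_ne_zero.mpr (Ne.symm hkl)
    have hMN : m - n ≠ 0 := sub_ne_zero.mpr (Ne.symm hnm)
    have hx : (b - l) * (m - k) - (l - n) * (k - a) ≠ 0 := by
      have h := mul_ne_zero hN hden1
      rw [f1] at h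
      exact (mul_ne_zero_iff.mp h).2
    have hz : (l - n) * (c - m) - (n - d) * (m - k) ≠ 0 := by
      have h := mul_ne_zero hN hden2
      rw [f2] at h
      exact (mul_ne_zero_iff.mp h).2
    have t1 : -(s₀ * g ^ 2) / ((s₀ + 1) * (l * m - k * n))
        = ((l - n + m - k) * g ^ 2) /
            (((l * m - k * n) - (l - n + m - k)) * (l * m - k * n)) := by
      rw [div_eq_div_iff (mul_ne_zero hs1 hN) (mul_ne_zero hd0 hN)]
      linear_combination (-(g ^ 2) * (l * m - k * n)) * hNs
    have c1 : ((b - l) * (m - k) - (l - n) * (k - a)) /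
        ((l - k) * ((b - l) * (m - k) - (l - n) * (k - a))) = 1 / (l - k) := by
      rw [mul_comm (l - k), ← div_div, div_self hx]
    have c2 : ((l - n) * (c - m) - (n - d) * (m - k)) /
        ((m - n) * ((l - n) * (c - m) - (n - d) * (m - k))) = 1 / (m - n) := by
      rw [mul_comm (m - n), ← div_div, div_self hz]
    rw [hG]
    simp only
    rw [t1, f1, f2, c1, c2]
    rw [div_add_div _ _ (mul_ne_zero hd0 hN) hLK,
      div_add_div _ _ (mul_ne_zero (mul_ne_zero hd0 hN) hLK) hMN,
      div_eq_div_iff (mul_ne_zero (mul_ne_zero (mul_ne_zero hd0 hN) hLK) hMN)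
        (mul_ne_zero (mul_ne_zero (mul_ne_zero hN hNM) hKL) hC)]
    ring
  have hT : Tendsto G (𝓝[≠] s₀)
      (𝓝 ((l - n + m - k) *
        ((m * l - n * k) * (m * l - n * k + k - m + n - l)
          + g ^ 2 * (n - m) * (k - l)) /
        ((l * m - k * n) * (n - m) * (k - l) *
          (m * l - n * k + k - m + n - l)))) := by
    rw [← hval]
    exact hcont.continuousWithinAt.tendsto
  refine Tendsto.congr' ?_ hT
  filter_upwards [self_mem_nhdsWithin] with s hs
  have ht : s - s₀ ≠ 0 := sub_ne_zero.mpr hs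
  rw [key s]
  exact (aux5 (s - s₀) (l * m - k * n) (s + 1)
    ((b * k - a * l) * s + b - l + k - a) ((n * c - m * d) * s + n - d + c - m)
    (-(s * g ^ 2)) ((b - l) * (m - k) - (l - n) * (k - a))
    ((l - n) * (c - m) - (n - d) * (m - k)) ht).symm
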